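/- arXiv:1911.06289 — 11 statements merged into one kernel-verified Lean document; each statement's English description precedes it below -/
import Mathlib

section
/- Let T be a tournament on n ≥ 2 vertices and let x be any vertex of T. There exists a set R of at most ⌊n/2⌋ edges of T such that in the tournament T^R obtained by reversing the edges of R, some vertex y ≠ x is a Condorcet winner (and hence x is not in the top cycle of T^R). -/
def IsTournament {V : Type*} (r : V → V → Prop) : Prop :=
  (∀ x, ¬ r x x) ∧ ∀ x y, x ≠ y → (r x y ↔ ¬ r y x)

def rev {V : Type*} (r : V → V → Prop) (R : Finset (V × V)) (a b : V) : Prop :=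
  ((a, b) ∉ R ∧ r a b) ∨ (b, a) ∈ R

theorem destructive_bound_top_cycle {V : Type*} [Fintype V] [DecidableEq V]
    (r : V → V → Prop) (hT : IsTournament r) (x : V)
    (hn : 2 ≤ Fintype.card V) :
    ∃ R : Finset (V × V), (∀ e ∈ R, r e.1 e.2) ∧
      R.card ≤ Fintype.card V / 2 ∧
      ∃ y : V, y ≠ x ∧ (∀ z : V, z ≠ y → rev r R y z) ∧
        ¬ (∀ z : V, Relation.ReflTransGen (rev r R) x z) := by
  classical
  set n := Fintype.card V with hn'
  set S : Finset V := Finset.univ.erase x with hS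
  have hScard : S.card = n - 1 := by
    simp [hS, Finset.card_erase_of_mem, hn']
  set m := S.card with hm
  have hm1 : 1 ≤ m := by omega
  -- out and in degree in S
  set f : V → ℕ := fun y => (S.filter (fun z => z ≠ y ∧ r y z)).card with hf
  set g : V → ℕ := fun y => (S.filter (fun z => z ≠ y ∧ r z y)).card with hg
  have hfg : ∀ y ∈ S, f y + g y = m - 1 := by
    intro y hy
    have hU : S.filter (fun z => z ≠ y ∧ r y z) ∪ S.filter (fun z => z ≠ y ∧ r z y)
        = S.erase y := by
      ext z
      simp only [Finset.mem_union, Finset.mem_filter, Finset.mem_erase]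
      constructor
      · rintro (⟨h1, h2, _⟩ | ⟨h1, h2, _⟩) <;> exact ⟨h2, h1⟩
      · rintro ⟨hzy, hzS⟩
        by_cases h : r y z
        · exact Or.inl ⟨hzS, hzy, h⟩
        · exact Or.inr ⟨hzS, hzy, by
            have := hT.2 z y hzy
            have := hT.2 y z (Ne.symm hzy)
            tauto⟩
    have hD : Disjoint (S.filter (fun z => z ≠ y ∧ r y z))
        (S.filter (fun z => z ≠ y ∧ r z y)) := by
      rw [Finset.disjoint_left]
      intro z hz1 hz2
      simp only [Finset.mem_filter] at hz1 hz2
      have := hT.2 y z (Ne.symm hz1.2.1)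
      tauto
    have := Finset.card_union_of_disjoint hD
    rw [hU, Finset.card_erase_of_mem hy] at this
    simpa [hf, hg] using this.symm
  have hsum : ∑ y ∈ S, f y = ∑ y ∈ S, g y := by
    have e1 : ∑ y ∈ S, f y = ∑ y ∈ S, ∑ z ∈ S, if z ≠ y ∧ r y z then 1 else 0 := by
      simp only [hf, Finset.card_filter]
    have e2 : ∑ y ∈ S, g y = ∑ y ∈ S, ∑ z ∈ S, if z ≠ y ∧ r z y then 1 else 0 := by
      simp only [hg, Finset.card_filter]
    rw [e1, e2, Finset.sum_comm]
    apply Finset.sum_congr rfl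
    intro a _
    apply Finset.sum_congr rfl
    intro b _
    have : (a ≠ b ∧ r b a) ↔ (b ≠ a ∧ r b a) := by
      constructor <;> rintro ⟨h1, h2⟩ <;> exact ⟨Ne.symm h1, h2⟩
    simp [this]
  -- pick y maximizing f
  have hSne : S.Nonempty := Finset.card_pos.mp (by omega)
  obtain ⟨y, hyS, hymax⟩ := S.exists_max_image f hSne
  have hsum2 : ∑ y ∈ S, (f y + g y) = m * (m - 1) := by
    rw [Finset.sum_congr rfl hfg]
    simp [mul_comm]
    exact Or.inl rfl
  have hsumle : ∑ z ∈ S, f z ≤ m * f y := by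
    calc ∑ z ∈ S, f z ≤ ∑ _z ∈ S, f y := Finset.sum_le_sum fun z hz => hymax z hz
    _ = m * f y := by simp [mul_comm]; exact Or.inl rfl
  have h2f : m - 1 ≤ 2 * f y := by
    have : m * (m - 1) ≤ m * (2 * f y) := by
      rw [← hsum2, Finset.sum_add_distrib, ← hsum]
      calc ∑ z ∈ S, f z + ∑ z ∈ S, f z ≤ m * f y + m * f y := by
            exact Nat.add_le_add hsumle hsumle
        _ = m * (2 * f y) := by ring
    exact Nat.le_of_mul_le_mul_left this (by omega)
  have hgy : g y ≤ (m - 1) / 2 := by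
    have := hfg y hyS
    omega
  -- define R
  set R : Finset (V × V) := (Finset.univ.filter (fun z => r z y)).image (fun z => (z, y))
    with hR
  have hmemR : ∀ a b : V, (a, b) ∈ R ↔ (b = y ∧ r a y) := by
    intro a b
    simp only [hR, Finset.mem_image, Finset.mem_filter, Finset.mem_univ, true_and]
    constructor
    · rintro ⟨z, hz, h⟩
      obtain ⟨rfl, rfl⟩ := Prod.mk.injEq .. ▸ (by
        have h1 := congrArg Prod.fst h
        have h2 := congrArg Prod.snd h
        exact ⟨h1, h2⟩ : z = a ∧ y = b)
      exact ⟨rfl, hz⟩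
    · rintro ⟨rfl, h⟩
      exact ⟨a, h, rfl⟩
  refine ⟨R, ?_, ?_, y, ?_, ?_, ?_⟩
  · rintro ⟨a, b⟩ hab
    obtain ⟨rfl, h⟩ := (hmemR a b).mp hab
    exact h
  · -- card bound
    have hsub : Finset.univ.filter (fun z => r z y) ⊆
        insert x (S.filter (fun z => z ≠ y ∧ r z y)) := by
      intro z hz
      simp only [Finset.mem_filter, Finset.mem_univ, true_and] at hz
      by_cases hzx : z = x
      · simp [hzx]
      · have hzy : z ≠ y := fun h => hT.1 y (h ▸ hz)
        simp only [Finset.mem_insert, Finset.mem_filter, hS, Finset.mem_erase]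
        exact Or.inr ⟨⟨hzx, Finset.mem_univ z⟩, hzy, hz⟩
    have h1 : R.card ≤ (Finset.univ.filter (fun z => r z y)).card :=
      Finset.card_image_le
    have h2 : (Finset.univ.filter (fun z => r z y)).card ≤ g y + 1 := by
      calc (Finset.univ.filter (fun z => r z y)).card
          ≤ (insert x (S.filter (fun z => z ≠ y ∧ r z y))).card :=
            Finset.card_le_card hsub
        _ ≤ g y + 1 := by
            simpa [hg] using Finset.card_insert_le x (S.filter (fun z => z ≠ y ∧ r z y))
    omega
  · -- y ≠ x
    exact (Finset.mem_erase.mp hyS).1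
  · -- y dominates all
    intro z hzy
    by_cases h : r y z
    · left
      refine ⟨fun hmem => ?_, h⟩
      exact hzy ((hmemR y z).mp hmem).1
    · right
      rw [hmemR]
      refine ⟨rfl, ?_⟩
      exact (hT.2 z y hzy).mpr h
  · -- x cannot reach y
    intro hreach
    have hnoedge : ∀ w : V, ¬ rev r R w y := by
      intro w hw
      rcases hw with ⟨hnot, hr⟩ | hmem
      · exact hnot ((hmemR w y).mpr ⟨rfl, hr⟩)
      · obtain ⟨hwy, hry⟩ := (hmemR y w).mp hmem
        exact hT.1 y (hwy ▸ hry)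
    rcases (hreach y).cases_tail with h | ⟨c, _, hc⟩
    · exact (Finset.mem_erase.mp hyS).1 h
    · exact hnoedge c hc
end

section
/- Let T be a tournament on n ≥ 2 vertices and x a vertex that is not in the top cycle of T. Then there exists a single edge e of T such that after reversing e, x is a 3-king, i.e., x reaches every other vertex by a directed path of length at most 3. Consequently, for every k ≥ 3, reversing one edge suffices to make x a k-king (and a member of the top cycle). -/
def reachIn {V : Type*} (r : V → V → Prop) : ℕ → V → V → Prop
  | 0, x, y => x = y
  | (k+1), x, y => x = y ∨ ∃ z, r x z ∧ reachIn r k z y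

lemma reachIn_self {V : Type*} {r : V → V → Prop} : ∀ (k : ℕ) (a : V), reachIn r k a a
  | 0, _ => rfl
  | (_+1), _ => Or.inl rfl

lemma reachIn_step {V : Type*} {r : V → V → Prop} {k : ℕ} {a b c : V}
    (h : r a b) (h2 : reachIn r k b c) : reachIn r (k+1) a c := Or.inr ⟨b, h, h2⟩

lemma reachIn_mono {V : Type*} {r : V → V → Prop} :
    ∀ {k : ℕ} {a b : V}, reachIn r k a b → reachIn r (k+1) a b := by
  intro k
  induction k with
  | zero => intro a b h; exact Or.inl h
  | succ n ih =>
    rintro a b (h | ⟨z, hz, h⟩)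
    · exact Or.inl h
    · exact Or.inr ⟨z, hz, ih h⟩

lemma reachIn_rtg {V : Type*} {r : V → V → Prop} :
    ∀ {k : ℕ} {a b : V}, reachIn r k a b → Relation.ReflTransGen r a b := by
  intro k
  induction k with
  | zero => intro a b h; exact h ▸ Relation.ReflTransGen.refl
  | succ n ih =>
    rintro a b (rfl | ⟨z, hz, h⟩)
    · exact Relation.ReflTransGen.refl
    · exact Relation.ReflTransGen.head hz (ih h)

lemma exists_king {V : Type*} [DecidableEq V] (r : V → V → Prop) (hT : IsTournament r)
    (D : Finset V) (hD : D.Nonempty) :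
    ∃ y ∈ D, ∀ d ∈ D, d = y ∨ r y d ∨ ∃ w ∈ D, r y w ∧ r w d := by
  classical
  obtain ⟨y, hy, hmax⟩ := D.exists_max_image (fun v => (D.filter (fun u => r v u)).card) hD
  refine ⟨y, hy, fun d hd => ?_⟩
  by_contra hcon
  push_neg at hcon
  obtain ⟨hdy, hyd, hw⟩ := hcon
  have hdy' : r d y := (hT.2 d y hdy).mpr hyd
  have hsub : insert y (D.filter (fun u => r y u)) ⊆ D.filter (fun u => r d u) := by
    intro w hw'
    rcases Finset.mem_insert.mp hw' with rfl | hw'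
    · exact Finset.mem_filter.mpr ⟨hy, hdy'⟩
    · obtain ⟨hwD, hyw⟩ := Finset.mem_filter.mp hw'
      have hwd : w ≠ d := by rintro rfl; exact hyd hyw
      have hnwd : ¬ r w d := fun h => hw w hwD hyw h
      exact Finset.mem_filter.mpr ⟨hwD, (hT.2 d w (Ne.symm hwd)).mpr hnwd⟩
  have hny : y ∉ D.filter (fun u => r y u) := by
    simp [hT.1 y]
  have := Finset.card_le_card hsub
  rw [Finset.card_insert_of_notMem hny] at this
  have := hmax d hd
  omega

theorem one_reversal_makes_three_king {V : Type*} [Fintype V] [DecidableEq V]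
    (r : V → V → Prop) (hT : IsTournament r) (x : V)
    (hn : 2 ≤ Fintype.card V)
    (hx : ¬ ∀ y : V, Relation.ReflTransGen r x y) :
    ∃ e : V × V, r e.1 e.2 ∧
      (∀ y : V, reachIn (rev r {e}) 3 x y) ∧
      (∀ k : ℕ, 3 ≤ k → ∀ y : V, reachIn (rev r {e}) k x y) ∧
      (∀ y : V, Relation.ReflTransGen (rev r {e}) x y) := by
  classical
  set D : Finset V := Finset.univ.filter (fun v => ¬ Relation.ReflTransGen r x v) with hDdef
  have hDne : D.Nonempty := by
    push_neg at hx
    obtain ⟨y, hy⟩ := hx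
    exact ⟨y, by simp [hDdef, hy]⟩
  have hxD : x ∉ D := by simp [hDdef]; exact Relation.ReflTransGen.refl
  have hDA : ∀ d ∈ D, ∀ a, Relation.ReflTransGen r x a → r d a := by
    intro d hd a ha
    have hdn : ¬ Relation.ReflTransGen r x d := by
      have := Finset.mem_filter.mp hd; exact this.2
    have hne : d ≠ a := by rintro rfl; exact hdn ha
    have hna : ¬ r a d := fun h => hdn (ha.tail h)
    exact (hT.2 d a hne).mpr hna
  obtain ⟨y, hyD, hking⟩ := exists_king r hT D hDne
  have hyx : r y x := hDA y hyD x Relation.ReflTransGen.refl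
  have hxy : x ≠ y := fun h => hxD (h ▸ hyD)
  set r' : V → V → Prop := rev r {((y, x) : V × V)} with hr'def
  have hr'xy : r' x y := Or.inr (Finset.mem_singleton_self _)
  have hr' : ∀ a b : V, r a b → ¬ (a = y ∧ b = x) → r' a b := by
    intro a b hab hne
    exact Or.inl ⟨by simpa [Prod.ext_iff] using hne, hab⟩
  have hDx : ∀ d ∈ D, d ≠ x := by rintro d hd rfl; exact hxD hd
  have h3 : ∀ z : V, reachIn r' 3 x z := by
    intro z
    by_cases hz : Relation.ReflTransGen r x z
    · rcases eq_or_ne z x with rfl | hzx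
      · exact reachIn_self 3 _
      · have hyz : r' y z := hr' y z (hDA y hyD z hz) (fun h => hzx h.2)
        exact reachIn_step hr'xy (reachIn_step hyz (reachIn_self 1 z))
    · have hzD : z ∈ D := Finset.mem_filter.mpr ⟨Finset.mem_univ z, hz⟩
      rcases hking z hzD with rfl | hyz | ⟨w, hwD, hyw, hwz⟩
      · exact reachIn_step hr'xy (reachIn_self 2 _)
      · have : r' y z := hr' y z hyz (fun h => hDx z hzD h.2)
        exact reachIn_step hr'xy (reachIn_step this (reachIn_self 1 z))
      · have h1 : r' y w := hr' y w hyw (fun h => hDx w hwD h.2)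
        have h2 : r' w z := hr' w z hwz (fun h => hDx z hzD h.2)
        exact reachIn_step hr'xy (reachIn_step h1 (reachIn_step h2 (reachIn_self 0 z)))
  refine ⟨(y, x), hyx, h3, ?_, fun z => reachIn_rtg (h3 z)⟩
  intro k hk z
  induction k with
  | zero => omega
  | succ n ih =>
    rcases Nat.lt_or_ge n 3 with h | h
    · have : n + 1 = 3 := by omega
      exact this ▸ h3 z
    · exact reachIn_mono (ih h)
end

section
/- Let T be a tournament on n ≥ 1 vertices and x any vertex. Then there exists a set R of at most ⌈log₂ n⌉ edges, each incident to x, such that in the tournament T^R the vertex x is in the uncovered set (reaches every other vertex in at most two steps). -/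
open Classical in
lemma exists_big_out {V : Type*} [Fintype V] [DecidableEq V]
    (r : V → V → Prop) (hT : IsTournament r) (S : Finset V) (hne : S.Nonempty) :
    ∃ v ∈ S, S.card ≤ 2 * (S.filter (fun w => r v w)).card + 1 := by
  by_contra hcon
  push_neg at hcon
  have key : 2 * ∑ v ∈ S, (S.filter (fun w => r v w)).card = S.card * (S.card - 1) := by
    have h1 : ∀ v ∈ S, (S.filter (fun w => r v w)).card = ∑ w ∈ S, (if r v w then 1 else 0) := by
      intro v _; rw [Finset.card_filter]
    calc 2 * ∑ v ∈ S, (S.filter (fun w => r v w)).card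
        = ∑ v ∈ S, ∑ w ∈ S, ((if r v w then 1 else 0) + (if r w v then 1 else 0)) := by
          rw [Finset.sum_congr rfl h1]
          rw [two_mul]
          nth_rewrite 2 [Finset.sum_comm]
          rw [← Finset.sum_add_distrib]
          exact Finset.sum_congr rfl fun v _ => (Finset.sum_add_distrib).symm
      _ = ∑ v ∈ S, ∑ w ∈ S, (if v = w then 0 else 1) := by
          refine Finset.sum_congr rfl fun v hv => Finset.sum_congr rfl fun w hw => ?_
          by_cases hvw : v = w
          · subst hvw; simp [hT.1 v]
          · simp only [if_neg hvw]
            by_cases h : r v w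
            · have h2 : ¬ r w v := (hT.2 v w hvw).mp h
              simp [h, h2]
            · have h2 : r w v := by
                by_contra h2
                exact h ((hT.2 v w hvw).mpr h2)
              simp [h, h2]
      _ = ∑ v ∈ S, (S.card - 1) := by
          refine Finset.sum_congr rfl fun v hv => ?_
          have : ∀ w ∈ S, (if v = w then 0 else 1) = if ¬ (v = w) then 1 else 0 := by
            intro w _; by_cases h : v = w <;> simp [h]
          rw [Finset.sum_congr rfl this, ← Finset.card_filter]
          have : S.filter (fun w => ¬ v = w) = S.erase v := by
            ext w; simp [Finset.mem_erase, and_comm, eq_comm]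
          rw [this, Finset.card_erase_of_mem hv]
      _ = S.card * (S.card - 1) := by rw [Finset.sum_const, smul_eq_mul]
  have hb : ∑ v ∈ S, (2 * (S.filter (fun w => r v w)).card + 2) ≤ ∑ v ∈ S, S.card := by
    refine Finset.sum_le_sum fun v hv => ?_
    have := hcon v hv
    omega
  rw [Finset.sum_add_distrib, ← Finset.mul_sum, Finset.sum_const, Finset.sum_const,
    smul_eq_mul, smul_eq_mul, key] at hb
  have hc : 0 < S.card := Finset.card_pos.mpr hne
  obtain ⟨m, hm⟩ := Nat.exists_eq_succ_of_ne_zero hc.ne'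
  rw [hm] at hb
  simp only [Nat.succ_sub_one] at hb
  nlinarith [hb]

open Classical in
lemma exists_dom {V : Type*} [Fintype V] [DecidableEq V]
    (r : V → V → Prop) (hT : IsTournament r) :
    ∀ n (S : Finset V), S.card = n →
      ∃ D : Finset V, D ⊆ S ∧ D.card ≤ Nat.clog 2 (n + 1) ∧
        ∀ y ∈ S, y ∈ D ∨ ∃ d ∈ D, r d y := by
  intro n
  induction n using Nat.strong_induction_on with
  | _ n ih =>
    intro S hS
    rcases Nat.eq_zero_or_pos n with h0 | hpos
    · subst h0
      rw [Finset.card_eq_zero] at hS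
      exact ⟨∅, by simp, by simp, by simp [hS]⟩
    · have hne : S.Nonempty := Finset.card_pos.mp (hS ▸ hpos)
      obtain ⟨v, hvS, hvdeg⟩ := exists_big_out r hT S hne
      set F := S.filter (fun w => r v w) with hF
      set S' := (S.erase v).filter (fun w => ¬ r v w) with hS'
      have hFsub : F ⊆ S.erase v := by
        intro w hw
        rw [hF, Finset.mem_filter] at hw
        refine Finset.mem_erase.mpr ⟨?_, hw.1⟩
        intro h; exact hT.1 v (h ▸ hw.2)
      have hFeq : (S.erase v).filter (fun w => r v w) = F := by
        rw [Finset.filter_erase]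
        exact Finset.erase_eq_of_notMem (fun h => hT.1 v (Finset.mem_filter.mp h).2)
      have hcard' : S'.card = (S.erase v).card - F.card := by
        have := Finset.card_filter_add_card_filter_not
          (s := S.erase v) (p := fun w => r v w)
        rw [hFeq] at this
        rw [hS']
        omega
      have herase : (S.erase v).card = n - 1 := by rw [Finset.card_erase_of_mem hvS, hS]
      have hFle : F.card ≤ n - 1 := herase ▸ Finset.card_le_card hFsub
      have hS'card : S'.card = n - 1 - F.card := by rw [hcard', herase]
      have hsmall : 2 * S'.card + 1 ≤ n := by rw [hS'card]; rw [hS] at hvdeg; omega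
      have hlt : S'.card < n := by omega
      obtain ⟨D', hD'sub, hD'card, hD'dom⟩ := ih S'.card hlt S' rfl
      refine ⟨insert v D', ?_, ?_, ?_⟩
      · intro w hw
        rcases Finset.mem_insert.mp hw with rfl | hw
        · exact hvS
        · exact (Finset.mem_erase.mp (Finset.mem_of_mem_filter w (hD'sub hw))).2
      · have hb2 : S'.card + 1 ≤ (n + 2) / 2 := by omega
        calc (insert v D').card ≤ D'.card + 1 := Finset.card_insert_le _ _
          _ ≤ Nat.clog 2 (S'.card + 1) + 1 := by omega
          _ ≤ Nat.clog 2 ((n + 2) / 2) + 1 :=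
              Nat.add_le_add_right (Nat.clog_mono_right 2 hb2) 1
          _ = Nat.clog 2 (n + 1) := by
              rw [eq_comm, Nat.clog_of_two_le (by norm_num) (by omega)]
              congr 3
      · intro y hyS
        by_cases hyv : y = v
        · exact Or.inl (Finset.mem_insert.mpr (Or.inl hyv))
        by_cases hry : r v y
        · exact Or.inr ⟨v, Finset.mem_insert_self v D', hry⟩
        · have hyS' : y ∈ S' := by
            rw [hS', Finset.mem_filter, Finset.mem_erase]
            exact ⟨⟨hyv, hyS⟩, hry⟩
          rcases hD'dom y hyS' with h | ⟨d, hd, hrd⟩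
          · exact Or.inl (Finset.mem_insert.mpr (Or.inr h))
          · exact Or.inr ⟨d, Finset.mem_insert.mpr (Or.inr hd), hrd⟩

theorem constructive_bound_uncovered {V : Type*} [Fintype V] [DecidableEq V]
    (r : V → V → Prop) (hT : IsTournament r) (x : V)
    (h1 : 1 ≤ Fintype.card V) :
    ∃ R : Finset (V × V), (∀ e ∈ R, r e.1 e.2) ∧
      (∀ e ∈ R, e.1 = x ∨ e.2 = x) ∧
      R.card ≤ Nat.clog 2 (Fintype.card V) ∧
      ∀ y : V, y ≠ x → reachIn (rev r R) 2 x y := by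
  classical
  set S := Finset.univ.erase x with hSdef
  have hScard : S.card = Fintype.card V - 1 := by
    rw [hSdef, Finset.card_erase_of_mem (Finset.mem_univ x), Finset.card_univ]
  obtain ⟨D, hDsub, hDcard, hDdom⟩ := exists_dom r hT S.card S rfl
  have hDcard' : D.card ≤ Nat.clog 2 (Fintype.card V) := by
    have : S.card + 1 = Fintype.card V := by omega
    rwa [this] at hDcard
  have hxD : x ∉ D := fun h => (Finset.mem_erase.mp (hDsub h)).1 rfl
  refine ⟨(D.filter (fun d => r d x)).image (fun d => (d, x)), ?_, ?_, ?_, ?_⟩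
  · intro e he
    obtain ⟨d, hd, rfl⟩ := Finset.mem_image.mp he
    exact (Finset.mem_filter.mp hd).2
  · intro e he
    obtain ⟨d, hd, rfl⟩ := Finset.mem_image.mp he
    exact Or.inr rfl
  · calc ((D.filter (fun d => r d x)).image (fun d => (d, x))).card
        ≤ (D.filter (fun d => r d x)).card := Finset.card_image_le
      _ ≤ D.card := Finset.card_filter_le _ _
      _ ≤ _ := hDcard'
  · intro y hy
    set R := (D.filter (fun d => r d x)).image (fun d => (d, x)) with hR
    have hmemR : ∀ a b : V, (a, b) ∈ R ↔ (a ∈ D ∧ r a x ∧ b = x) := by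
      intro a b
      simp only [hR, Finset.mem_image, Finset.mem_filter, Prod.mk.injEq]
      constructor
      · rintro ⟨d, ⟨hd, hrd⟩, rfl, rfl⟩; exact ⟨hd, hrd, rfl⟩
      · rintro ⟨hd, hrd, rfl⟩; exact ⟨a, ⟨hd, hrd⟩, rfl, rfl⟩
    have hxd : ∀ d ∈ D, rev r R x d := by
      intro d hd
      have hdx : d ≠ x := (Finset.mem_erase.mp (hDsub hd)).1
      by_cases h : r d x
      · exact Or.inr ((hmemR d x).mpr ⟨hd, h, rfl⟩)
      · refine Or.inl ⟨?_, ?_⟩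
        · intro hmem
          obtain ⟨_, _, hdx'⟩ := (hmemR x d).mp hmem
          exact hdx hdx'
        · have hrx : r x d ↔ ¬ r d x := hT.2 x d (Ne.symm hdx)
          have hrd : r d x ↔ ¬ r x d := hT.2 d x hdx
          tauto
    have hyS : y ∈ S := Finset.mem_erase.mpr ⟨hy, Finset.mem_univ y⟩
    rcases hDdom y hyS with hyD | ⟨d, hd, hrd⟩
    · exact Or.inr ⟨y, hxd y hyD, Or.inl rfl⟩
    · refine Or.inr ⟨d, hxd d hd, Or.inr ⟨y, ?_, rfl⟩⟩
      refine Or.inl ⟨?_, hrd⟩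
      intro hmem
      exact hy ((hmemR d y).mp hmem).2.2
end

section
/- Let T be a tournament, x a vertex not in the uncovered set, and R a set of edges whose reversal places x in the uncovered set of T^R. Then there exists a set R' of edges, all incident to x, with |R'| ≤ |R|, whose reversal also places x in the uncovered set. -/
lemma reach2_iff {V : Type*} (s : V → V → Prop) (x w : V) :
    reachIn s 2 x w ↔ x = w ∨ ∃ u, s x u ∧ (u = w ∨ ∃ v, s u v ∧ v = w) := by
  simp [reachIn]

lemma replace_step {V : Type*} [Fintype V] [DecidableEq V]
    (r : V → V → Prop) (hT : IsTournament r) (x z y : V)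
    (R : Finset (V × V)) (hRE : ∀ e ∈ R, r e.1 e.2)
    (hR : ∀ w : V, reachIn (rev r R) 2 x w)
    (hzy : (z, y) ∈ R) (hz : z ≠ x) (hy : y ≠ x) :
    ∃ R₂ : Finset (V × V), (∀ e ∈ R₂, r e.1 e.2) ∧ R₂.card ≤ R.card ∧
      (R₂.filter (fun e => e.1 ≠ x ∧ e.2 ≠ x)).card <
        (R.filter (fun e => e.1 ≠ x ∧ e.2 ≠ x)).card ∧
      ∀ w : V, reachIn (rev r R₂) 2 x w := by
  classical
  have hrzy : r z y := hRE _ hzy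
  have hzney : z ≠ y := by rintro rfl; exact hT.1 z hrzy
  by_cases hzx : r z x
  · -- replace (z,y) by (z,x)
    refine ⟨insert (z, x) (R.erase (z, y)), ?_, ?_, ?_, ?_⟩
    · intro e he
      rcases Finset.mem_insert.mp he with h | h
      · subst h; exact hzx
      · exact hRE _ (Finset.mem_of_mem_erase h)
    · have h1 : (R.erase (z, y)).card + 1 ≤ R.card := by
        have h2 := Finset.card_erase_of_mem hzy
        have h3 : 0 < R.card := Finset.card_pos.mpr ⟨_, hzy⟩
        omega
      exact (Finset.card_insert_le _ _).trans h1
    · have hsub : (insert (z, x) (R.erase (z, y))).filter (fun e => e.1 ≠ x ∧ e.2 ≠ x)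
          ⊆ (R.filter (fun e => e.1 ≠ x ∧ e.2 ≠ x)).erase (z, y) := by
        intro e he
        simp only [Finset.mem_filter, Finset.mem_insert, Finset.mem_erase] at he ⊢
        rcases he with ⟨h | h, hp⟩
        · subst h; exact absurd rfl hp.2
        · exact ⟨h.1, h.2, hp⟩
      have hmem : (z, y) ∈ R.filter (fun e => e.1 ≠ x ∧ e.2 ≠ x) := by
        simp [hzy, hz, hy]
      calc ((insert (z, x) (R.erase (z, y))).filter (fun e => e.1 ≠ x ∧ e.2 ≠ x)).card
          ≤ ((R.filter (fun e => e.1 ≠ x ∧ e.2 ≠ x)).erase (z, y)).card :=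
            Finset.card_le_card hsub
        _ < (R.filter (fun e => e.1 ≠ x ∧ e.2 ≠ x)).card :=
            Finset.card_erase_lt_of_mem hmem
    · set R₂ := insert (z, x) (R.erase (z, y)) with hR₂
      have hxz : rev r R₂ x z := Or.inr (Finset.mem_insert_self _ _)
      -- transfer lemma
      have hA : ∀ a b, rev r R a b → rev r R₂ a b ∨ (a = y ∧ b = z) ∨ (a = z ∧ b = x) := by
        intro a b hab
        rcases hab with ⟨hnotin, hr⟩ | hin
        · by_cases h2 : (a, b) ∈ R₂
          · rcases Finset.mem_insert.mp h2 with h | h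
            · rw [Prod.mk.injEq] at h
              exact Or.inr (Or.inr h)
            · exact absurd (Finset.mem_of_mem_erase h) hnotin
          · exact Or.inl (Or.inl ⟨h2, hr⟩)
        · by_cases h2 : (b, a) ∈ R₂
          · exact Or.inl (Or.inr h2)
          · have hne : (b, a) = (z, y) := by
              by_contra hne
              exact h2 (Finset.mem_insert_of_mem (Finset.mem_erase.mpr ⟨hne, hin⟩))
            rw [Prod.mk.injEq] at hne
            exact Or.inr (Or.inl ⟨hne.2, hne.1⟩)
      intro w
      rcases (reach2_iff (rev r R) x w).mp (hR w) with heq | ⟨u, hxu, hrest⟩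
      · exact (reach2_iff _ _ _).mpr (Or.inl heq)
      · rcases hA x u hxu with hxu2 | ⟨hxy, _⟩ | ⟨hxz', _⟩
        · rcases hrest with heq | ⟨v, huv, heq⟩
          · exact (reach2_iff _ _ _).mpr (Or.inr ⟨u, hxu2, Or.inl heq⟩)
          · rcases hA u v huv with huv2 | ⟨_, hvz⟩ | ⟨_, hvx⟩
            · exact (reach2_iff _ _ _).mpr (Or.inr ⟨u, hxu2, Or.inr ⟨v, huv2, heq⟩⟩)
            · exact (reach2_iff _ _ _).mpr (Or.inr ⟨z, hxz, Or.inl (hvz.symm.trans heq)⟩)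
            · exact (reach2_iff _ _ _).mpr (Or.inl (hvx.symm.trans heq))
        · exact absurd hxy hy.symm
        · exact absurd hxz' hz.symm
  · -- drop (z,y), also drop (x,z) if present; note r x z holds
    have hxzr : r x z := by
      rcases hT with ⟨hi, ht⟩
      exact (ht x z (Ne.symm hz)).mpr hzx
    refine ⟨(R.erase (z, y)).erase (x, z), ?_, ?_, ?_, ?_⟩
    · intro e he
      exact hRE _ (Finset.mem_of_mem_erase (Finset.mem_of_mem_erase he))
    · exact Finset.card_le_card (fun e he =>
        Finset.mem_of_mem_erase (Finset.mem_of_mem_erase he))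
    · have hsub : ((R.erase (z, y)).erase (x, z)).filter (fun e => e.1 ≠ x ∧ e.2 ≠ x)
          ⊆ (R.filter (fun e => e.1 ≠ x ∧ e.2 ≠ x)).erase (z, y) := by
        intro e he
        simp only [Finset.mem_filter, Finset.mem_erase] at he ⊢
        exact ⟨he.1.2.1, he.1.2.2, he.2⟩
      have hmem : (z, y) ∈ R.filter (fun e => e.1 ≠ x ∧ e.2 ≠ x) := by
        simp [hzy, hz, hy]
      calc _ ≤ ((R.filter (fun e => e.1 ≠ x ∧ e.2 ≠ x)).erase (z, y)).card :=
            Finset.card_le_card hsub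
        _ < _ := Finset.card_erase_lt_of_mem hmem
    · set R₂ := (R.erase (z, y)).erase (x, z) with hR₂
      have hxz : rev r R₂ x z := by
        refine Or.inl ⟨?_, hxzr⟩
        intro h
        exact (Finset.mem_erase.mp h).1 rfl
      have hA : ∀ a b, rev r R a b → rev r R₂ a b ∨ (a = y ∧ b = z) ∨ (a = z ∧ b = x) := by
        intro a b hab
        rcases hab with ⟨hnotin, hr⟩ | hin
        · by_cases h2 : (a, b) ∈ R₂
          · exact absurd (Finset.mem_of_mem_erase (Finset.mem_of_mem_erase h2)) hnotin
          · exact Or.inl (Or.inl ⟨h2, hr⟩)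
        · by_cases h2 : (b, a) ∈ R₂
          · exact Or.inl (Or.inr h2)
          · by_cases he1 : (b, a) = (x, z)
            · rw [Prod.mk.injEq] at he1
              exact Or.inr (Or.inr ⟨he1.2, he1.1⟩)
            · have he2 : (b, a) = (z, y) := by
                by_contra hne
                exact h2 (Finset.mem_erase.mpr ⟨he1, Finset.mem_erase.mpr ⟨hne, hin⟩⟩)
              rw [Prod.mk.injEq] at he2
              exact Or.inr (Or.inl ⟨he2.2, he2.1⟩)
      intro w
      rcases (reach2_iff (rev r R) x w).mp (hR w) with heq | ⟨u, hxu, hrest⟩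
      · exact (reach2_iff _ _ _).mpr (Or.inl heq)
      · rcases hA x u hxu with hxu2 | ⟨hxy, _⟩ | ⟨hxz', _⟩
        · rcases hrest with heq | ⟨v, huv, heq⟩
          · exact (reach2_iff _ _ _).mpr (Or.inr ⟨u, hxu2, Or.inl heq⟩)
          · rcases hA u v huv with huv2 | ⟨_, hvz⟩ | ⟨_, hvx⟩
            · exact (reach2_iff _ _ _).mpr (Or.inr ⟨u, hxu2, Or.inr ⟨v, huv2, heq⟩⟩)
            · exact (reach2_iff _ _ _).mpr (Or.inr ⟨z, hxz, Or.inl (hvz.symm.trans heq)⟩)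
            · exact (reach2_iff _ _ _).mpr (Or.inl (hvx.symm.trans heq))
        · exact absurd hxy hy.symm
        · exact absurd hxz' hz.symm

theorem uncovered_crs_incident_edges {V : Type*} [Fintype V] [DecidableEq V]
    (r : V → V → Prop) (hT : IsTournament r) (x : V)
    (hx : ¬ ∀ y : V, reachIn r 2 x y)
    (R : Finset (V × V)) (hRE : ∀ e ∈ R, r e.1 e.2)
    (hR : ∀ y : V, reachIn (rev r R) 2 x y) :
    ∃ R' : Finset (V × V), (∀ e ∈ R', r e.1 e.2) ∧
      (∀ e ∈ R', e.1 = x ∨ e.2 = x) ∧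
      R'.card ≤ R.card ∧
      ∀ y : V, reachIn (rev r R') 2 x y := by
  classical
  have main : ∀ n (S : Finset (V × V)),
      (S.filter (fun e => e.1 ≠ x ∧ e.2 ≠ x)).card = n →
      (∀ e ∈ S, r e.1 e.2) → (∀ w : V, reachIn (rev r S) 2 x w) →
      ∃ R' : Finset (V × V), (∀ e ∈ R', r e.1 e.2) ∧
        (∀ e ∈ R', e.1 = x ∨ e.2 = x) ∧
        R'.card ≤ S.card ∧
        ∀ y : V, reachIn (rev r R') 2 x y := by
    intro n
    induction n using Nat.strong_induction_on with
    | _ n ih =>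
      intro S hcard hSE hS
      by_cases hemp : (S.filter (fun e => e.1 ≠ x ∧ e.2 ≠ x)) = ∅
      · refine ⟨S, hSE, ?_, le_refl _, hS⟩
        intro e he
        by_contra hcon
        push_neg at hcon
        have : e ∈ S.filter (fun e => e.1 ≠ x ∧ e.2 ≠ x) :=
          Finset.mem_filter.mpr ⟨he, hcon⟩
        simp [hemp] at this
      · obtain ⟨e, he⟩ := Finset.nonempty_of_ne_empty hemp
        have heS := (Finset.mem_filter.mp he).1
        have hep := (Finset.mem_filter.mp he).2
        obtain ⟨R₂, h1, h2, h3, h4⟩ :=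
          replace_step r hT x e.1 e.2 S hSE hS heS hep.1 hep.2
        rw [hcard] at h3
        obtain ⟨R', g1, g2, g3, g4⟩ :=
          ih _ h3 R₂ rfl h1 h4
        exact ⟨R', g1, g2, g3.trans h2, g4⟩
  exact main _ R rfl hRE hR
end

section
/- Let T be a tournament in which x is a Condorcet loser and the subtournament T restricted to V(T)∖{x} has no dominating set of size less than d. Then any set R of edge reversals after which x lies in the uncovered set of T^R satisfies |R| ≥ d. -/
theorem condorcet_loser_uncovered_lower_bound {V : Type*} [Fintype V] [DecidableEq V]
    (r : V → V → Prop) (hT : IsTournament r) (x : V) (d : ℕ)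
    (hloser : ∀ y : V, y ≠ x → r y x)
    (hdom : ∀ X : Finset V, x ∉ X →
      (∀ v : V, v ≠ x → v ∉ X → ∃ u ∈ X, r u v) → d ≤ X.card) :
    ∀ R : Finset (V × V), (∀ e ∈ R, r e.1 e.2) →
      (∀ y : V, reachIn (rev r R) 2 x y) → d ≤ R.card := by
  intro R hR hreach
  -- x has no original out-edges
  have hxout : ∀ z : V, ¬ r x z := by
    intro z hz
    by_cases hzx : z = x
    · exact hT.1 x (hzx ▸ hz)
    · exact ((hT.2 x z (Ne.symm hzx)).mp hz) (hloser z hzx)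
  have hstep : ∀ z : V, rev r R x z → (z, x) ∈ R := by
    intro z h
    rcases h with ⟨_, h2⟩ | h
    · exact absurd h2 (hxout z)
    · exact h
  set X : Finset V := R.image Prod.fst with hX
  have hxX : x ∉ X := by
    intro hx
    rcases Finset.mem_image.mp hx with ⟨e, he, hfst⟩
    exact hxout e.2 (hfst ▸ hR e he)
  have hdomX : ∀ v : V, v ≠ x → v ∉ X → ∃ u ∈ X, r u v := by
    intro v hvx hvX
    rcases hreach v with h | ⟨z, hxz, hz⟩
    · exact absurd h.symm hvx
    · have hzR : (z, x) ∈ R := hstep z hxz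
      have hzX : z ∈ X := Finset.mem_image.mpr ⟨(z, x), hzR, rfl⟩
      rcases hz with h | ⟨w, hzw, hw⟩
      · exact absurd (h ▸ hzX) hvX
      · cases hw
        rcases hzw with ⟨_, h2⟩ | h
        · exact ⟨z, hzX, h2⟩
        · exact absurd (Finset.mem_image.mpr ⟨(v, z), h, rfl⟩) hvX
  calc d ≤ X.card := hdom X hxX hdomX
    _ ≤ R.card := Finset.card_image_le
end

section
/- Let T be a tournament on n vertices and x any vertex. Then x can be made a Banks winner by reversing at most ⌈log₂ n⌉ edges: there exists R with |R| ≤ ⌈log₂ n⌉ such that in T^R, x is the maximal element of an inclusion-maximal transitive subtournament. -/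
/-- `x` is a Banks winner of `r`: it is the maximal element of an inclusion-maximal
transitive subtournament. -/
def IsBanksWinner {V : Type*} [DecidableEq V] (r : V → V → Prop) (x : V) : Prop :=
  ∃ C : Finset V, x ∈ C ∧
    (∀ a ∈ C, ∀ b ∈ C, ∀ c ∈ C, r a b → r b c → r a c) ∧
    (∀ y ∈ C, y ≠ x → r x y) ∧
    ¬ ∃ z : V, ∀ y ∈ C, r z y

open Classical

lemma rev_irrefl {V : Type*} (r : V → V → Prop) (hT : IsTournament r) (R : Finset (V × V))
    (h1 : ∀ e ∈ R, r e.1 e.2) (a : V) : ¬ rev r R a a := by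
  rintro (⟨_, hr⟩ | hm)
  · exact hT.1 a hr
  · exact hT.1 a (h1 _ hm)

lemma rev_asymm {V : Type*} (r : V → V → Prop) (hT : IsTournament r) (R : Finset (V × V))
    (h1 : ∀ e ∈ R, r e.1 e.2) (h6 : ∀ e ∈ R, (e.2, e.1) ∉ R) (a b : V)
    (hab : rev r R a b) (hba : rev r R b a) : False := by
  rcases hab with ⟨hab, hrab⟩ | hba'
  · rcases hba with ⟨hba, hrba⟩ | hab'
    · rcases eq_or_ne a b with rfl | hne
      · exact hT.1 a hrab
      · exact ((hT.2 a b hne).mp hrab) hrba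
    · exact hab hab'
  · rcases hba with ⟨hba, hrba⟩ | hab'
    · exact hba hba'
    · exact h6 (b, a) hba' hab'

/-- A Copeland winner loses to at most half of the other vertices. -/
lemma copeland {V : Type*} [Fintype V] [DecidableEq V] (r : V → V → Prop)
    (hT : IsTournament r) (B : Finset V) (hB : B.Nonempty) :
    ∃ y ∈ B, 2 * (B.filter fun z => r z y).card + 1 ≤ B.card := by
  by_contra h
  push_neg at h
  have hsum : ∑ y ∈ B, (B.filter fun z => r z y).card
      = ∑ z ∈ B, (B.filter fun y => r z y).card := by
    simp only [Finset.card_filter]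
    exact Finset.sum_comm
  have hpart : ∀ y ∈ B, (B.filter fun z => r z y).card + (B.filter fun z => r y z).card + 1
      = B.card := by
    intro y hy
    have hdisj : Disjoint (B.filter fun z => r z y) (B.filter fun z => r y z) := by
      rw [Finset.disjoint_left]
      intro z hz1 hz2
      simp only [Finset.mem_filter] at hz1 hz2
      rcases eq_or_ne z y with rfl | hne
      · exact hT.1 z hz1.2
      · exact ((hT.2 z y hne).mp hz1.2) hz2.2
    have hunion : (B.filter fun z => r z y) ∪ (B.filter fun z => r y z) = B.erase y := by
      ext z
      simp only [Finset.mem_union, Finset.mem_filter, Finset.mem_erase]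
      constructor
      · rintro (⟨hz, hr⟩ | ⟨hz, hr⟩)
        · exact ⟨fun h' => hT.1 y (h' ▸ hr), hz⟩
        · exact ⟨fun h' => hT.1 y (h' ▸ hr), hz⟩
      · rintro ⟨hne, hz⟩
        by_cases hr : r z y
        · exact Or.inl ⟨hz, hr⟩
        · exact Or.inr ⟨hz, (hT.2 y z (Ne.symm hne)).mpr hr⟩
    have hcard := Finset.card_union_of_disjoint hdisj
    rw [hunion, Finset.card_erase_of_mem hy] at hcard
    have hm : 1 ≤ B.card := Finset.card_pos.mpr ⟨y, hy⟩
    omega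
  have hm : 1 ≤ B.card := Finset.card_pos.mpr hB
  have h1 : B.card * B.card ≤ ∑ y ∈ B, 2 * (B.filter fun z => r z y).card := by
    calc B.card * B.card = ∑ _y ∈ B, B.card := by rw [Finset.sum_const, smul_eq_mul]
    _ ≤ ∑ y ∈ B, 2 * (B.filter fun z => r z y).card :=
        Finset.sum_le_sum fun y hy => by have := h y hy; omega
  have h2 : ∑ y ∈ B, 2 * (B.filter fun z => r z y).card = B.card * (B.card - 1) := by
    have hsplit : ∑ y ∈ B, 2 * (B.filter fun z => r z y).card
        = ∑ y ∈ B, ((B.filter fun z => r z y).card + (B.filter fun z => r y z).card) := by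
      rw [Finset.sum_add_distrib, ← hsum, ← Finset.sum_add_distrib]
      exact Finset.sum_congr rfl fun y _ => two_mul _
    rw [hsplit]
    calc ∑ y ∈ B, ((B.filter fun z => r z y).card + (B.filter fun z => r y z).card)
        = ∑ _y ∈ B, (B.card - 1) :=
          Finset.sum_congr rfl fun y hy => by have := hpart y hy; omega
    _ = B.card * (B.card - 1) := by rw [Finset.sum_const, smul_eq_mul]
  rw [h2] at h1
  have := Nat.le_of_mul_le_mul_left h1 (by omega)
  omega

lemma banks_of_no_dom {V : Type*} [Fintype V] [DecidableEq V] (r : V → V → Prop)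
    (hT : IsTournament r) (x : V) (C : Finset V) (R : Finset (V × V))
    (h1 : ∀ e ∈ R, r e.1 e.2) (h2 : ∀ e ∈ R, e.1 ∈ C ∧ e.2 ∈ C)
    (hx : x ∈ C) (h4 : ∀ y ∈ C, y ≠ x → rev r R x y)
    (h5 : ∀ a ∈ C, ∀ b ∈ C, ∀ c ∈ C, rev r R a b → rev r R b c → rev r R a c)
    (hB : (Finset.univ.filter fun z => ∀ c ∈ C, r z c) = ∅) :
    IsBanksWinner (rev r R) x := by
  refine ⟨C, hx, h5, h4, ?_⟩
  rintro ⟨z, hz⟩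
  by_cases hzC : z ∈ C
  · exact rev_irrefl r hT R h1 z (hz z hzC)
  · have hmem : z ∈ Finset.univ.filter fun z => ∀ c ∈ C, r z c := by
      simp only [Finset.mem_filter, Finset.mem_univ, true_and]
      intro c hc
      rcases hz c hc with ⟨_, hr⟩ | hm
      · exact hr
      · exact absurd ((h2 _ hm).2) hzC
    rw [hB] at hmem
    exact absurd hmem (Finset.notMem_empty z)

lemma key {V : Type*} [Fintype V] [DecidableEq V] (r : V → V → Prop)
    (hT : IsTournament r) (x : V) :
    ∀ b : ℕ, ∀ C : Finset V, ∀ R : Finset (V × V),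
    (∀ e ∈ R, r e.1 e.2) → (∀ e ∈ R, e.1 ∈ C ∧ e.2 ∈ C) → (∀ e ∈ R, (e.2, e.1) ∉ R) →
    x ∈ C → (∀ y ∈ C, y ≠ x → rev r R x y) →
    (∀ a ∈ C, ∀ b ∈ C, ∀ c ∈ C, rev r R a b → rev r R b c → rev r R a c) →
    (Finset.univ.filter fun z => ∀ c ∈ C, r z c).card < 2 ^ b →
    ∃ R' : Finset (V × V), (∀ e ∈ R', r e.1 e.2) ∧ R'.card ≤ R.card + b ∧
      IsBanksWinner (rev r R') x := by
  intro b
  induction b with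
  | zero =>
    intro C R h1 h2 h6 hx h4 h5 hcard
    refine ⟨R, h1, by omega, banks_of_no_dom r hT x C R h1 h2 hx h4 h5 ?_⟩
    rw [pow_zero] at hcard
    exact Finset.card_eq_zero.mp (by omega)
  | succ b ih =>
    intro C R h1 h2 h6 hx h4 h5 hcard
    by_cases hBe : (Finset.univ.filter fun z => ∀ c ∈ C, r z c) = ∅
    · exact ⟨R, h1, by omega, banks_of_no_dom r hT x C R h1 h2 hx h4 h5 hBe⟩
    · set B := (Finset.univ.filter fun z => ∀ c ∈ C, r z c) with hBdef
      obtain ⟨y, hyB, hdeg⟩ := copeland r hT B (Finset.nonempty_of_ne_empty hBe)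
      have hyC : ∀ c ∈ C, r y c := (Finset.mem_filter.mp hyB).2
      have hyx : r y x := hyC x hx
      have hynex : y ≠ x := fun h => hT.1 x (h ▸ hyx)
      have hyNC : y ∉ C := fun h => hT.1 y (hyC y h)
      set Cn := insert y C with hCndef
      set Rn := insert (y, x) R with hRndef
      have hyxR : (y, x) ∉ R := fun h => hyNC (h2 _ h).1
      have h1' : ∀ e ∈ Rn, r e.1 e.2 := by
        intro e he
        rcases Finset.mem_insert.mp he with rfl | he'
        · exact hyx
        · exact h1 e he'
      have h2' : ∀ e ∈ Rn, e.1 ∈ Cn ∧ e.2 ∈ Cn := by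
        intro e he
        rcases Finset.mem_insert.mp he with rfl | he'
        · exact ⟨Finset.mem_insert_self _ _, Finset.mem_insert_of_mem hx⟩
        · exact ⟨Finset.mem_insert_of_mem (h2 e he').1, Finset.mem_insert_of_mem (h2 e he').2⟩
      have h6' : ∀ e ∈ Rn, (e.2, e.1) ∉ Rn := by
        intro e he hswap
        rcases Finset.mem_insert.mp he with rfl | he'
        · rcases Finset.mem_insert.mp hswap with heq | hsw'
          · exact hynex (Prod.ext_iff.mp heq).1.symm
          · exact hyNC (h2 _ hsw').2
        · rcases Finset.mem_insert.mp hswap with heq | hsw'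
          · have hA : e.2 = y := congrArg Prod.fst heq
            exact hyNC (hA ▸ (h2 e he').2)
          · exact h6 e he' hsw'
      have hx' : x ∈ Cn := Finset.mem_insert_of_mem hx
      have hmemR : ∀ a b : V, a ≠ y → ((a, b) ∈ Rn ↔ (a, b) ∈ R) := by
        intro a b ha
        constructor
        · intro h'
          rcases Finset.mem_insert.mp h' with heq | h''
          · exact absurd (Prod.ext_iff.mp heq).1 ha
          · exact h''
        · exact fun h' => Finset.mem_insert_of_mem h'
      have hagree : ∀ a ∈ C, ∀ b ∈ C, (rev r Rn a b ↔ rev r R a b) := by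
        intro a ha b hb
        have hay : a ≠ y := fun h => hyNC (h ▸ ha)
        have hby : b ≠ y := fun h => hyNC (h ▸ hb)
        unfold rev
        rw [hmemR a b hay, hmemR b a hby]
      have hxy' : rev r Rn x y := Or.inr (Finset.mem_insert_self _ _)
      have h4' : ∀ c ∈ Cn, c ≠ x → rev r Rn x c := by
        intro c hc hcx
        rcases Finset.mem_insert.mp hc with rfl | hcC
        · exact hxy'
        · exact (hagree x hx c hcC).mpr (h4 c hcC hcx)
      have rev_y_C : ∀ c ∈ C, c ≠ x → rev r Rn y c := by
        intro c hcC hcx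
        refine Or.inl ⟨?_, hyC c hcC⟩
        intro h'
        rcases Finset.mem_insert.mp h' with heq | h''
        · exact hcx (Prod.ext_iff.mp heq).2
        · exact hyNC (h2 _ h'').1
      have asym : ∀ a b : V, rev r Rn a b → rev r Rn b a → False :=
        rev_asymm r hT Rn h1' h6'
      have hnotx : ∀ u ∈ Cn, ¬ rev r Rn u x := by
        intro u hu h'
        by_cases hux : u = x
        · exact rev_irrefl r hT Rn h1' x (hux ▸ h')
        · exact asym x u (h4' u hu hux) h'
      have hnoty : ∀ u ∈ Cn, u ≠ x → ¬ rev r Rn u y := by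
        intro u hu hux h'
        rcases Finset.mem_insert.mp hu with rfl | huC
        · exact rev_irrefl r hT Rn h1' u h'
        · exact asym y u (rev_y_C u huC hux) h'
      have h5' : ∀ a ∈ Cn, ∀ b ∈ Cn, ∀ c ∈ Cn,
          rev r Rn a b → rev r Rn b c → rev r Rn a c := by
        intro a ha b hb c hc hab hbc
        by_cases hcx : c = x
        · subst hcx
          exact absurd hbc (hnotx b hb)
        rcases Finset.mem_insert.mp ha with rfl | haC
        · rcases Finset.mem_insert.mp hc with rfl | hcC
          · by_cases hbx : b = x
            · subst hbx
              exact absurd hab (hnotx _ ha)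
            · exact absurd hbc (hnoty b hb hbx)
          · exact rev_y_C c hcC hcx
        · by_cases hax : a = x
          · subst hax
            exact h4' c hc hcx
          by_cases hbx : b = x
          · subst hbx
            exact absurd hab (hnotx a (Finset.mem_insert_of_mem haC))
          rcases Finset.mem_insert.mp hb with rfl | hbC
          · exact absurd hab (hnoty a (Finset.mem_insert_of_mem haC) hax)
          rcases Finset.mem_insert.mp hc with rfl | hcC
          · exact absurd hbc (hnoty b (Finset.mem_insert_of_mem hbC) hbx)
          · exact (hagree a haC c hcC).mpr
              (h5 a haC b hbC c hcC ((hagree a haC b hbC).mp hab) ((hagree b hbC c hcC).mp hbc))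
      have hsub : (Finset.univ.filter fun z => ∀ c ∈ Cn, r z c) ⊆ B.filter fun z => r z y := by
        intro z hz
        simp only [Finset.mem_filter, Finset.mem_univ, true_and] at hz ⊢
        refine ⟨Finset.mem_filter.mpr ⟨Finset.mem_univ z, fun c hc => hz c (Finset.mem_insert_of_mem hc)⟩,
          hz y (Finset.mem_insert_self _ _)⟩
      have hBn : (Finset.univ.filter fun z => ∀ c ∈ Cn, r z c).card < 2 ^ b := by
        have h' := Finset.card_le_card hsub
        have hp : 2 ^ (b + 1) = 2 * 2 ^ b := by rw [pow_succ]; ring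
        omega
      obtain ⟨R', hR'1, hR'2, hR'3⟩ := ih Cn Rn h1' h2' h6' hx' h4' h5' hBn
      have hRncard : Rn.card = R.card + 1 := Finset.card_insert_of_notMem hyxR
      exact ⟨R', hR'1, by omega, hR'3⟩

theorem constructive_bound_banks {V : Type*} [Fintype V] [DecidableEq V]
    (r : V → V → Prop) (hT : IsTournament r) (x : V) :
    ∃ R : Finset (V × V), (∀ e ∈ R, r e.1 e.2) ∧
      R.card ≤ Nat.clog 2 (Fintype.card V) ∧
      IsBanksWinner (rev r R) x := by
  have hxnot : x ∉ (Finset.univ.filter fun z => ∀ c ∈ ({x} : Finset V), r z c) := by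
    simp only [Finset.mem_filter, Finset.mem_univ, true_and, Finset.mem_singleton]
    intro h'
    exact hT.1 x (h' x rfl)
  have hlt : (Finset.univ.filter fun z => ∀ c ∈ ({x} : Finset V), r z c).card < Fintype.card V := by
    rw [← Finset.card_univ]
    exact Finset.card_lt_card
      ((Finset.ssubset_iff_of_subset (Finset.subset_univ _)).mpr ⟨x, Finset.mem_univ x, hxnot⟩)
  have hbound : (Finset.univ.filter fun z => ∀ c ∈ ({x} : Finset V), r z c).card
      < 2 ^ Nat.clog 2 (Fintype.card V) := by
    have := Nat.le_pow_clog one_lt_two (Fintype.card V)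
    omega
  obtain ⟨R, h1, h2, h3⟩ := key r hT x (Nat.clog 2 (Fintype.card V)) {x} ∅
    (by simp) (by simp) (by simp) (Finset.mem_singleton_self x)
    (fun y hy hne => absurd (Finset.mem_singleton.mp hy) hne)
    (by
      intro a ha b hb c hc hab _
      rcases hab with ⟨_, hr⟩ | hm
      · rw [Finset.mem_singleton] at ha hb
        subst ha; subst hb
        exact absurd hr (hT.1 _)
      · exact absurd hm (Finset.notMem_empty _))
    hbound
  exact ⟨R, h1, by simpa using h2, h3⟩
end

section
/- Let T be a tournament whose strongly connected components, ordered so that every vertex of an earlier component dominates every vertex of a later component, are T₁, …, T_k with k ≥ 2, and let x belong to component T_r with r ≥ 2. Then reversing a single edge from some vertex of T_r to some vertex of T₁ yields a tournament in which x is in the top cycle. -/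
theorem tc_one_reversal_via_components {V : Type*} [Fintype V] [DecidableEq V]
    (r : V → V → Prop) (hT : IsTournament r)
    (k : ℕ) (hk : 2 ≤ k) (C : Fin k → Finset V)
    (hpart : ∀ v : V, ∃! j : Fin k, v ∈ C j)
    (hne : ∀ j : Fin k, (C j).Nonempty)
    (hscc : ∀ j : Fin k, ∀ a ∈ C j, ∀ b ∈ C j, Relation.ReflTransGen r a b)
    (hdom : ∀ j j' : Fin k, j < j' → ∀ a ∈ C j, ∀ b ∈ C j', r a b)
    (i : Fin k) (hi : 1 ≤ i.val) (x : V) (hx : x ∈ C i) :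
    ∃ a ∈ C i, ∃ b ∈ C (⟨0, by omega⟩ : Fin k), r b a ∧
      ∀ y : V, Relation.ReflTransGen (rev r {(b, a)}) x y := by
  set z : Fin k := ⟨0, by omega⟩ with hz
  obtain ⟨b, hb⟩ := hne z
  have hzi : z < i := by
    simp only [Fin.lt_def, hz]; omega
  have hbx : r b x := hdom z i hzi b hb x hx
  -- unique component membership
  have huniq : ∀ v : V, ∀ j j' : Fin k, v ∈ C j → v ∈ C j' → j = j' := by
    intro v j j' h1 h2
    obtain ⟨w, hw, hwu⟩ := hpart v
    rw [hwu j h1, hwu j' h2]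
  -- no r-edge from outside C 0 into C 0
  have hnoin : ∀ u w : V, r u w → w ∈ C z → u ∈ C z := by
    intro u w huw hw
    obtain ⟨j, hj, _⟩ := hpart u
    by_contra hu
    have hjz : j ≠ z := fun h => hu (h ▸ hj)
    have hzj : z < j := by
      have : 0 < j.val := by
        rcases Nat.eq_zero_or_pos j.val with h0 | h0
        · exact absurd (Fin.ext (by simp [hz, h0]) : j = z) hjz
        · exact h0
      simpa [hz, Fin.lt_def] using this
    have hwu : r w u := hdom z j hzj w hw u hj
    have hne' : u ≠ w := by
      rintro rfl; exact hu hw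
    exact (hT.2 u w hne').mp huw hwu
  refine ⟨x, hx, b, hb, hbx, ?_⟩
  have hxnz : x ∉ C z := by
    intro h
    have := huniq x z i h hx
    rw [← this] at hzi
    exact lt_irrefl _ hzi
  -- any r-path ending in C 0 lifts to the reversed tournament
  have key : ∀ u y : V, y ∈ C z → Relation.ReflTransGen r u y →
      u ∈ C z ∧ Relation.ReflTransGen (rev r {(b, x)}) u y := by
    intro u y hy h
    induction h using Relation.ReflTransGen.head_induction_on with
    | refl => exact ⟨hy, Relation.ReflTransGen.refl⟩
    | head huw _ ih =>
      rename_i u' w' _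
      obtain ⟨hwz, hwy⟩ := ih
      have huz := hnoin _ _ huw hwz
      refine ⟨huz, Relation.ReflTransGen.head ?_ hwy⟩
      left
      refine ⟨?_, huw⟩
      simp only [Finset.mem_singleton, Prod.mk.injEq, not_and]
      rintro rfl rfl
      exact hxnz hwz
  intro y
  by_cases hyx : y = x
  · subst hyx; exact Relation.ReflTransGen.refl
  have hxb : Relation.ReflTransGen (rev r {(b, x)}) x b :=
    Relation.ReflTransGen.single (Or.inr (by simp))
  obtain ⟨j, hj, _⟩ := hpart y
  by_cases hjz : j = z
  · subst hjz
    exact hxb.trans (key b y hj (hscc _ b hb y hj)).2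
  · have hzj : z < j := by
      have : 0 < j.val := by
        rcases Nat.eq_zero_or_pos j.val with h0 | h0
        · exact absurd (Fin.ext (by simp [hz, h0]) : j = z) hjz
        · exact h0
      simpa [hz, Fin.lt_def] using this
    have hby : r b y := hdom z j hzj b hb y hj
    refine hxb.trans (Relation.ReflTransGen.single ?_)
    left
    refine ⟨?_, hby⟩
    simp only [Finset.mem_singleton, Prod.mk.injEq, not_and]
    exact fun _ h => hyx h
end

section
/- Let T be a tournament and x a vertex. If x dominates some vertex y that is in the uncovered set of T (and y ≠ x), then x is in the top cycle of T. In particular x can reach every other vertex by a directed path of length at most 3. -/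
theorem dominate_uncovered_implies_tc {V : Type*}
    (r : V → V → Prop) (hT : IsTournament r) (x y : V) (hxy : y ≠ x)
    (hdom : r x y) (hy : ∀ z : V, z ≠ y → reachIn r 2 y z) :
    (∀ z : V, Relation.ReflTransGen r x z) ∧ (∀ z : V, reachIn r 3 x z) := by
  have key : ∀ k (a b : V), reachIn r k a b → Relation.ReflTransGen r a b := by
    intro k
    induction k with
    | zero => intro a b h; cases h; exact Relation.ReflTransGen.refl
    | succ n ih =>
      intro a b h
      rcases h with rfl | ⟨z, hz, hzb⟩
      · exact Relation.ReflTransGen.refl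
      · exact Relation.ReflTransGen.head hz (ih z b hzb)
  have h3 : ∀ z : V, reachIn r 3 x z := by
    intro z
    by_cases hzx : z = x
    · exact Or.inl hzx.symm
    · by_cases hzy : z = y
      · subst hzy
        exact Or.inr ⟨z, hdom, Or.inl rfl⟩
      · exact Or.inr ⟨y, hdom, hy z hzy⟩
  exact ⟨fun z => key 3 x z (h3 z), h3⟩
end

section
/- For even n = 2ℓ with ℓ ≥ 1, consider the tournament T on vertices x, y₁, …, y_{2ℓ−1}, where x dominates every yᵢ and each yᵢ dominates the ℓ−1 cyclically following vertices y_{i+1}, …, y_{i+ℓ−1} (indices mod 2ℓ−1). Then for any set R of fewer than ℓ edges of T, x remains in the Banks set of the tournament T^R obtained by reversing the edges of R. -/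
/-- The tournament on `x = none` and the `2ℓ-1` vertices `some i`:
`x` dominates all `some i`, and `some i` dominates the `ℓ-1` cyclically
following vertices. -/
def cyc (ℓ : ℕ) : Option (Fin (2 * ℓ - 1)) → Option (Fin (2 * ℓ - 1)) → Prop
  | none, none => False
  | none, some _ => True
  | some _, none => False
  | some i, some j =>
      1 ≤ (j.val + (2 * ℓ - 1) - i.val) % (2 * ℓ - 1) ∧
      (j.val + (2 * ℓ - 1) - i.val) % (2 * ℓ - 1) ≤ ℓ - 1

lemma mod2 (x m : ℕ) (hm : 0 < m) (hx : x < 2 * m) :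
    (x % m = x ∧ x < m) ∨ (x % m = x - m ∧ m ≤ x) := by
  rcases Nat.lt_or_ge x m with h | h
  · exact Or.inl ⟨Nat.mod_eq_of_lt h, h⟩
  · refine Or.inr ⟨?_, h⟩
    rw [Nat.mod_eq_sub_mod h, Nat.mod_eq_of_lt (by omega)]

/-- shift by `ℓ-1` cyclically -/
def Jmap (ℓ : ℕ) (i : Fin (2 * ℓ - 1)) : Fin (2 * ℓ - 1) :=
  ⟨(i.val + (ℓ - 1)) % (2 * ℓ - 1), Nat.mod_lt _ i.pos⟩

lemma cyc_some_iff (ℓ : ℕ) (a b : Fin (2 * ℓ - 1)) :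
    cyc ℓ (some a) (some b) ↔
      1 ≤ (b.val + (2 * ℓ - 1) - a.val) % (2 * ℓ - 1) ∧
      (b.val + (2 * ℓ - 1) - a.val) % (2 * ℓ - 1) ≤ ℓ - 1 := Iff.rfl

lemma cyc_asymm {ℓ : ℕ} {a b : Fin (2 * ℓ - 1)} (h1 : cyc ℓ (some a) (some b))
    (h2 : cyc ℓ (some b) (some a)) : False := by
  rw [cyc_some_iff] at h1 h2
  have ha := a.isLt
  have hb := b.isLt
  have hm : 0 < 2 * ℓ - 1 := a.pos
  rcases mod2 (b.val + (2 * ℓ - 1) - a.val) (2 * ℓ - 1) hm (by omega) with h | h <;>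
  rcases mod2 (a.val + (2 * ℓ - 1) - b.val) (2 * ℓ - 1) hm (by omega) with h' | h' <;>
  omega

lemma cyc_irrefl {ℓ : ℕ} (a : Fin (2 * ℓ - 1)) : ¬ cyc ℓ (some a) (some a) :=
  fun h => cyc_asymm h h

lemma cyc_shift {ℓ : ℕ} {k i : Fin (2 * ℓ - 1)} (h1 : cyc ℓ (some k) (some i))
    (h2 : cyc ℓ (some k) (some (Jmap ℓ i))) : False := by
  rw [cyc_some_iff] at h1 h2
  have ha := k.isLt
  have hb := i.isLt
  have hm : 0 < 2 * ℓ - 1 := k.pos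
  have hJ : (Jmap ℓ i).val = (i.val + (ℓ - 1)) % (2 * ℓ - 1) := rfl
  rw [hJ] at h2
  rcases mod2 (i.val + (ℓ - 1)) (2 * ℓ - 1) hm (by omega) with h | h <;>
    rw [h.1] at h2 <;>
    rcases mod2 (i.val + (2 * ℓ - 1) - k.val) (2 * ℓ - 1) hm (by omega) with h' | h' <;>
    [rcases mod2 (i.val + (ℓ - 1) + (2 * ℓ - 1) - k.val) (2 * ℓ - 1) hm (by omega) with h'' | h'';
     rcases mod2 (i.val + (ℓ - 1) + (2 * ℓ - 1) - k.val) (2 * ℓ - 1) hm (by omega) with h'' | h'';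
     rcases mod2 (i.val + (ℓ - 1) - (2 * ℓ - 1) + (2 * ℓ - 1) - k.val) (2 * ℓ - 1) hm (by omega) with h'' | h'';
     rcases mod2 (i.val + (ℓ - 1) - (2 * ℓ - 1) + (2 * ℓ - 1) - k.val) (2 * ℓ - 1) hm (by omega) with h'' | h''] <;>
    omega

lemma Jmap_inj {ℓ : ℕ} {a b : Fin (2 * ℓ - 1)} (h : Jmap ℓ a = Jmap ℓ b) : a = b := by
  have hv : (a.val + (ℓ - 1)) % (2 * ℓ - 1) = (b.val + (ℓ - 1)) % (2 * ℓ - 1) :=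
    congrArg Fin.val h
  have ha := a.isLt
  have hb := b.isLt
  have hm : 0 < 2 * ℓ - 1 := a.pos
  apply Fin.ext
  rcases mod2 (a.val + (ℓ - 1)) (2 * ℓ - 1) hm (by omega) with h1 | h1 <;>
  rcases mod2 (b.val + (ℓ - 1)) (2 * ℓ - 1) hm (by omega) with h2 | h2 <;>
  omega

/-- the (at most two) pair-indices a given vertex belongs to -/
def touch (ℓ : ℕ) (v : Fin (2 * ℓ - 1)) : Finset (Fin (2 * ℓ - 1)) :=
  insert v (Finset.univ.filter fun i => Jmap ℓ i = v)

lemma touch_card (ℓ : ℕ) (v : Fin (2 * ℓ - 1)) : (touch ℓ v).card ≤ 2 := by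
  refine le_trans (Finset.card_insert_le _ _) ?_
  have h1 : (Finset.univ.filter fun i => Jmap ℓ i = v).card ≤ 1 := by
    apply Finset.card_le_one.mpr
    intro a ha b hb
    simp only [Finset.mem_filter] at ha hb
    exact Jmap_inj (ha.2.trans hb.2.symm)
  omega

lemma mem_touch_self (ℓ : ℕ) (v : Fin (2 * ℓ - 1)) : v ∈ touch ℓ v :=
  Finset.mem_insert_self _ _

lemma mem_touch_J (ℓ : ℕ) (i : Fin (2 * ℓ - 1)) : i ∈ touch ℓ (Jmap ℓ i) :=
  Finset.mem_insert_of_mem (by simp)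

/-- which pair-indices an edge reversal can spoil -/
def spoiled (ℓ : ℕ) : Option (Fin (2 * ℓ - 1)) × Option (Fin (2 * ℓ - 1)) →
    Finset (Fin (2 * ℓ - 1))
  | (none, some z) => touch ℓ z
  | (some u, _) => touch ℓ u
  | (none, none) => ∅

lemma spoiled_card (ℓ : ℕ) (e : Option (Fin (2 * ℓ - 1)) × Option (Fin (2 * ℓ - 1))) :
    (spoiled ℓ e).card ≤ 2 := by
  obtain ⟨a, b⟩ := e
  cases a <;> cases b <;> simp only [spoiled] <;>
    first | simp | exact touch_card _ _

theorem banks_destructive_lower_bound (ℓ : ℕ) (hℓ : 1 ≤ ℓ)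
    (R : Finset (Option (Fin (2 * ℓ - 1)) × Option (Fin (2 * ℓ - 1))))
    (hRE : ∀ e ∈ R, cyc ℓ e.1 e.2) (hcard : R.card < ℓ) :
    IsBanksWinner (rev (cyc ℓ) R) none := by
  classical
  set S : Finset (Fin (2 * ℓ - 1)) := R.biUnion (spoiled ℓ) with hSdef
  have hScard : S.card < 2 * ℓ - 1 := by
    have h1 : S.card ≤ ∑ e ∈ R, (spoiled ℓ e).card := Finset.card_biUnion_le
    have h2 : ∑ e ∈ R, (spoiled ℓ e).card ≤ R.card * 2 := by
      refine Finset.sum_le_card_nsmul _ _ 2 (fun e _ => spoiled_card ℓ e)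
    omega
  have hex : ∃ i : Fin (2 * ℓ - 1), i ∉ S := by
    by_contra h
    push_neg at h
    have hle : (Finset.univ : Finset (Fin (2 * ℓ - 1))).card ≤ S.card :=
      Finset.card_le_card (fun i _ => h i)
    rw [Finset.card_univ, Fintype.card_fin] at hle
    omega
  obtain ⟨i, hi⟩ := hex
  have hmemS : ∀ e ∈ R, i ∈ spoiled ℓ e → False :=
    fun e he hj => hi (Finset.mem_biUnion.mpr ⟨e, he, hj⟩)
  -- basic consequences of `i ∉ S`
  have hxi : (none, some i) ∉ R := fun h => hmemS _ h (mem_touch_self ℓ i)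
  have hxj : (none, some (Jmap ℓ i)) ∉ R := fun h => hmemS _ h (mem_touch_J ℓ i)
  have hBi : ∀ b, (some i, b) ∉ R := fun b h => hmemS _ h (mem_touch_self ℓ i)
  have hBj : ∀ b, (some (Jmap ℓ i), b) ∉ R := fun b h => hmemS _ h (mem_touch_J ℓ i)
  -- structural facts about the reversed relation
  have hRnone : ∀ a, (a, none) ∉ R := by
    intro a h
    have := hRE _ h
    cases a <;> simp only [cyc] at this
  have h5 : ¬ rev (cyc ℓ) R none none := by
    rintro (⟨-, h⟩ | h)
    · exact h
    · exact hRnone none h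
  have h6 : ∀ v : Fin (2 * ℓ - 1), ¬ rev (cyc ℓ) R (some v) (some v) := by
    rintro v (⟨-, h⟩ | h)
    · exact cyc_irrefl v h
    · exact cyc_irrefl v (hRE _ h)
  have h1 : rev (cyc ℓ) R none (some i) := Or.inl ⟨hxi, trivial⟩
  have h2 : rev (cyc ℓ) R none (some (Jmap ℓ i)) := Or.inl ⟨hxj, trivial⟩
  have h3 : ¬ rev (cyc ℓ) R (some i) none := by
    rintro (⟨-, h⟩ | h)
    · exact h
    · exact hxi h
  have h4 : ¬ rev (cyc ℓ) R (some (Jmap ℓ i)) none := by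
    rintro (⟨-, h⟩ | h)
    · exact h
    · exact hxj h
  have h7 : ¬ (rev (cyc ℓ) R (some i) (some (Jmap ℓ i)) ∧
      rev (cyc ℓ) R (some (Jmap ℓ i)) (some i)) := by
    rintro ⟨hab | hab, hba | hba⟩
    · exact cyc_asymm hab.2 hba.2
    · exact hBi _ hba
    · exact hBj _ hab
    · exact hBi _ hba
  -- the chain
  refine ⟨{none, some i, some (Jmap ℓ i)}, by simp, ?_, ?_, ?_⟩
  · intro a ha b hb c hc hab hbc
    simp only [Finset.mem_insert, Finset.mem_singleton] at ha hb hc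
    rcases ha with rfl | rfl | rfl <;> rcases hb with rfl | rfl | rfl <;>
      rcases hc with rfl | rfl | rfl <;> tauto
  · intro y hy hyne
    simp only [Finset.mem_insert, Finset.mem_singleton] at hy
    rcases hy with rfl | rfl | rfl
    · exact absurd rfl hyne
    · exact h1
    · exact h2
  · rintro ⟨z, hz⟩
    have hz1 := hz none (by simp)
    cases z with
    | none => exact h5 hz1
    | some k =>
      have hz2 := hz (some i) (by simp)
      have hz3 := hz (some (Jmap ℓ i)) (by simp)
      have hc2 : cyc ℓ (some k) (some i) := by
        rcases hz2 with ⟨-, h⟩ | h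
        · exact h
        · exact absurd h (hBi _)
      have hc3 : cyc ℓ (some k) (some (Jmap ℓ i)) := by
        rcases hz3 with ⟨-, h⟩ | h
        · exact h
        · exact absurd h (hBj _)
      exact cyc_shift hc2 hc3
end

section
/- For even n = 2ℓ with ℓ ≥ 1, consider the tournament T on vertices x, y₁, …, y_{2ℓ−1}, where x dominates every yᵢ and each yᵢ dominates the ℓ−1 cyclically following vertices (indices mod 2ℓ−1). Then for any set R of fewer than ℓ = n/2 edges, x remains a Copeland winner (vertex of maximum outdegree) of T^R. -/
noncomputable def outdeg {V : Type*} (r : V → V → Prop) (x : V) : ℕ :=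
  {y | r x y}.ncard

theorem copeland_destructive_lower_bound (ℓ : ℕ) (hℓ : 1 ≤ ℓ)
    (R : Finset (Option (Fin (2 * ℓ - 1)) × Option (Fin (2 * ℓ - 1))))
    (hRE : ∀ e ∈ R, cyc ℓ e.1 e.2) (hcard : R.card < ℓ) :
    ∀ v : Option (Fin (2 * ℓ - 1)),
      outdeg (rev (cyc ℓ) R) v ≤ outdeg (rev (cyc ℓ) R) none := by
  classical
  intro v
  haveI : NeZero (2 * ℓ - 1) := ⟨by omega⟩
  cases v with
  | none => exact le_refl _
  | some i =>
  set Sx : Set (Option (Fin (2 * ℓ - 1))) := {y | rev (cyc ℓ) R none y} with hSx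
  set Sv : Set (Option (Fin (2 * ℓ - 1))) := {y | rev (cyc ℓ) R (some i) y} with hSv
  set Bx : Set (Option (Fin (2 * ℓ - 1))) := {y | (none, y) ∈ R} with hBx
  set Av : Set (Option (Fin (2 * ℓ - 1))) := {y | (y, some i) ∈ R} with hAv
  set Dx : Set (Option (Fin (2 * ℓ - 1))) := {y | cyc ℓ none y} with hDx
  set Dv : Set (Option (Fin (2 * ℓ - 1))) := {y | cyc ℓ (some i) y} with hDv
  -- outdeg of none in cyc is 2ℓ-1
  have hDxcard : Dx.ncard = 2 * ℓ - 1 := by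
    have h : Dx = Set.range some := by
      ext y; cases y <;> simp [hDx, cyc]
    rw [h, ← Set.image_univ,
      Set.ncard_image_of_injective _ (Option.some_injective _), Set.ncard_univ,
      Nat.card_eq_fintype_card, Fintype.card_fin]
  -- outdeg of some i in cyc is at most ℓ - 1
  have hDvcard : Dv.ncard ≤ ℓ - 1 := by
    have h1 : Dv = some '' {j : Fin (2 * ℓ - 1) |
        1 ≤ (j.val + (2 * ℓ - 1) - i.val) % (2 * ℓ - 1) ∧
        (j.val + (2 * ℓ - 1) - i.val) % (2 * ℓ - 1) ≤ ℓ - 1} := by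
      ext y
      cases y with
      | none => simp [hDv, cyc]
      | some j =>
        simp only [hDv, Set.mem_setOf_eq, Set.mem_image, Option.some.injEq]
        constructor
        · intro h; exact ⟨j, h, rfl⟩
        · rintro ⟨k, hk, rfl⟩; exact hk
    rw [h1, Set.ncard_image_of_injective _ (Option.some_injective _)]
    set P : Set (Fin (2 * ℓ - 1)) := {j : Fin (2 * ℓ - 1) |
        1 ≤ (j.val + (2 * ℓ - 1) - i.val) % (2 * ℓ - 1) ∧
        (j.val + (2 * ℓ - 1) - i.val) % (2 * ℓ - 1) ≤ ℓ - 1} with hP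
    have hfun : ∀ j : Fin (2 * ℓ - 1), (j - i).val
        = (j.val + (2 * ℓ - 1) - i.val) % (2 * ℓ - 1) := by
      intro j
      rw [Fin.sub_def]
      simp only
      congr 1
      omega
    have hinj : Function.Injective (fun j : Fin (2 * ℓ - 1) => (j - i).val) := by
      intro a b h
      have h2 : a - i = b - i := Fin.val_injective h
      simpa using congrArg (· + i) h2
    have himg : (fun j : Fin (2 * ℓ - 1) => (j - i).val) '' P ⊆ Set.Icc 1 (ℓ - 1) := by
      rintro n ⟨j, hj, rfl⟩
      simp only [hfun]
      exact ⟨hj.1, hj.2⟩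
    calc P.ncard = ((fun j : Fin (2 * ℓ - 1) => (j - i).val) '' P).ncard :=
          (Set.ncard_image_of_injective _ hinj).symm
      _ ≤ (Set.Icc 1 (ℓ - 1)).ncard :=
          Set.ncard_le_ncard himg (Set.finite_Icc _ _)
      _ = ℓ - 1 := by
          rw [← Finset.coe_Icc, Set.ncard_coe_finset, Nat.card_Icc]; omega
  -- a + b ≤ ℓ
  have hab : Av.ncard + Bx.ncard ≤ ℓ := by
    set A' := (fun y : Option (Fin (2 * ℓ - 1)) => (y, some i)) '' Av with hA'
    set B' := (fun y : Option (Fin (2 * ℓ - 1)) =>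
      ((none : Option (Fin (2 * ℓ - 1))), y)) '' Bx with hB'
    have hAc : A'.ncard = Av.ncard :=
      Set.ncard_image_of_injective _ (by intro a b h; simpa using h)
    have hBc : B'.ncard = Bx.ncard :=
      Set.ncard_image_of_injective _ (by intro a b h; simpa using h)
    have hunion : A' ∪ B' ⊆ (R : Set _) := by
      rintro p (⟨y, hy, rfl⟩ | ⟨y, hy, rfl⟩)
      · exact hy
      · exact hy
    have hinter : A' ∩ B' ⊆ {((none : Option (Fin (2 * ℓ - 1))), some i)} := by
      rintro p ⟨⟨y, _, rfl⟩, ⟨z, _, h2⟩⟩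
      simp only [Prod.mk.injEq] at h2
      simp [← h2.1, Set.mem_singleton_iff]
    have key := Set.ncard_union_add_ncard_inter A' B' (Set.toFinite _) (Set.toFinite _)
    have h1 : (A' ∪ B').ncard ≤ R.card := by
      rw [← Set.ncard_coe_finset R]
      exact Set.ncard_le_ncard hunion (Set.toFinite _)
    have h2 : (A' ∩ B').ncard ≤ 1 := by
      calc (A' ∩ B').ncard ≤ ({(none, some i)} :
            Set (Option (Fin (2 * ℓ - 1)) × Option (Fin (2 * ℓ - 1)))).ncard :=
            Set.ncard_le_ncard hinter (Set.finite_singleton _)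
        _ = 1 := Set.ncard_singleton _
    omega
  -- lower bound on outdeg of none
  have hxlow : 2 * ℓ - 1 ≤ outdeg (rev (cyc ℓ) R) none + Bx.ncard := by
    have hsub : Dx ⊆ Sx ∪ Bx := by
      intro y hy
      by_cases hmem : y ∈ Bx
      · exact Or.inr hmem
      · exact Or.inl (Or.inl ⟨hmem, hy⟩)
    have h1 : Dx.ncard ≤ (Sx ∪ Bx).ncard := Set.ncard_le_ncard hsub (Set.toFinite _)
    have h2 : (Sx ∪ Bx).ncard ≤ Sx.ncard + Bx.ncard := Set.ncard_union_le _ _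
    have h3 : outdeg (rev (cyc ℓ) R) none = Sx.ncard := rfl
    omega
  -- upper bound on outdeg of some i
  have hvup : outdeg (rev (cyc ℓ) R) (some i) ≤ Dv.ncard + Av.ncard := by
    have hsub : Sv ⊆ Dv ∪ Av := by
      rintro y (⟨_, hy⟩ | hy)
      · exact Or.inl hy
      · exact Or.inr hy
    have h1 : Sv.ncard ≤ (Dv ∪ Av).ncard := Set.ncard_le_ncard hsub (Set.toFinite _)
    have h2 : (Dv ∪ Av).ncard ≤ Dv.ncard + Av.ncard := Set.ncard_union_le _ _
    have h3 : outdeg (rev (cyc ℓ) R) (some i) = Sv.ncard := rfl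
    omega
  omega
end

section
/- Let T be a tournament and x a vertex such that some vertex y covers x, i.e., y dominates x and D(x) ⊆ D(y). Then x is not in the Banks set of T: every transitive subtournament with x as maximal element can be extended. -/
theorem covered_not_banks_winner {V : Type*} [DecidableEq V]
    (r : V → V → Prop) (hT : IsTournament r) (x y : V)
    (hyx : r y x) (hcov : ∀ z : V, r x z → r y z) :
    (∀ C : Finset V, x ∈ C →
      (∀ a ∈ C, ∀ b ∈ C, ∀ c ∈ C, r a b → r b c → r a c) →
      (∀ w ∈ C, w ≠ x → r x w) →
      ∃ z : V, ∀ w ∈ C, r z w) ∧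
    ¬ IsBanksWinner r x := by
  have key : ∀ C : Finset V, x ∈ C →
      (∀ w ∈ C, w ≠ x → r x w) → ∃ z : V, ∀ w ∈ C, r z w := by
    intro C hxC hhead
    refine ⟨y, fun w hw => ?_⟩
    by_cases hwx : w = x
    · exact hwx ▸ hyx
    · exact hcov w (hhead w hw hwx)
  refine ⟨fun C hxC _ hhead => key C hxC hhead, ?_⟩
  rintro ⟨C, hxC, _, hhead, hnoz⟩
  exact hnoz (key C hxC hhead)
end
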